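/- Let v(t) = (V sin(w₀t), V sin(w₀t − 2π/3), V sin(w₀t + 2π/3)) with V > 0 (balanced positive-sequence three-phase voltage). Then ‖v(t)‖² = (3/2)V² (constant), ρ(t) = 0, and ω_vec(t) = (w₀/√3)·(1,1,1) for all t; in particular ‖ω_vec‖ = |w₀|. -/

import Mathlib

open scoped InnerProductSpace

noncomputable def cross3 (a b : EuclideanSpace ℝ (Fin 3)) : EuclideanSpace ℝ (Fin 3) :=
  WithLp.toLp 2 ![a 1 * b 2 - a 2 * b 1, a 2 * b 0 - a 0 * b 2, a 0 * b 1 - a 1 * b 0]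

lemma cos_two_pi_div_three' : Real.cos (2 * Real.pi / 3) = -(1/2) := by
  have : (2 : ℝ) * Real.pi / 3 = Real.pi - Real.pi / 3 := by ring
  rw [this, Real.cos_pi_sub, Real.cos_pi_div_three]

lemma sin_two_pi_div_three' : Real.sin (2 * Real.pi / 3) = Real.sqrt 3 / 2 := by
  have : (2 : ℝ) * Real.pi / 3 = Real.pi - Real.pi / 3 := by ring
  rw [this, Real.sin_pi_sub, Real.sin_pi_div_three]

lemma sincos_comp (V w₀ φ t : ℝ) :
    HasDerivAt (fun t => V * Real.sin (w₀ * t + φ)) (V * (w₀ * Real.cos (w₀ * t + φ))) t := by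
  have h1 : HasDerivAt (fun t : ℝ => w₀ * t + φ) w₀ t := by
    simpa using ((hasDerivAt_id t).const_mul w₀).add_const φ
  have h2 := (Real.hasDerivAt_sin (w₀ * t + φ)).comp t h1
  simpa [mul_comm] using h2.const_mul V

theorem positive_sequence_invariants (V w₀ : ℝ) (hV : 0 < V)
    (v : ℝ → EuclideanSpace ℝ (Fin 3))
    (hv : v = fun t => (WithLp.toLp 2 ![V * Real.sin (w₀ * t), V * Real.sin (w₀ * t - 2 * Real.pi / 3),
      V * Real.sin (w₀ * t + 2 * Real.pi / 3)] : EuclideanSpace ℝ (Fin 3))) (t : ℝ) :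
    ‖v t‖ ^ 2 = 3 / 2 * V ^ 2 ∧
    ⟪v t, deriv v t⟫_ℝ / ‖v t‖ ^ 2 = 0 ∧
    (‖v t‖ ^ 2)⁻¹ • cross3 (v t) (deriv v t) =
      (w₀ / Real.sqrt 3) • (WithLp.toLp 2 ![1, 1, 1] : EuclideanSpace ℝ (Fin 3)) ∧
    ‖(‖v t‖ ^ 2)⁻¹ • cross3 (v t) (deriv v t)‖ = |w₀| := by
  have hr3 : Real.sqrt 3 ^ 2 = 3 := Real.sq_sqrt (by norm_num)
  have hr3pos : (0:ℝ) < Real.sqrt 3 := Real.sqrt_pos.mpr (by norm_num)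
  set s := Real.sin (w₀ * t) with hs
  set c := Real.cos (w₀ * t) with hc
  set r := Real.sqrt 3 with hrr
  have hsc : s ^ 2 + c ^ 2 = 1 := Real.sin_sq_add_cos_sq _
  -- expand shifted sines/cosines
  have hsm : Real.sin (w₀ * t - 2 * Real.pi / 3) = s * (-(1/2)) - c * (r / 2) := by
    rw [Real.sin_sub, cos_two_pi_div_three', sin_two_pi_div_three']
  have hsp : Real.sin (w₀ * t + 2 * Real.pi / 3) = s * (-(1/2)) + c * (r / 2) := by
    rw [Real.sin_add, cos_two_pi_div_three', sin_two_pi_div_three']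
  have hcm : Real.cos (w₀ * t - 2 * Real.pi / 3) = c * (-(1/2)) + s * (r / 2) := by
    rw [Real.cos_sub, cos_two_pi_div_three', sin_two_pi_div_three']
  have hcp : Real.cos (w₀ * t + 2 * Real.pi / 3) = c * (-(1/2)) - s * (r / 2) := by
    rw [Real.cos_add, cos_two_pi_div_three', sin_two_pi_div_three']
  -- derivative
  have hderiv : deriv v t = (WithLp.toLp 2 ![V * (w₀ * Real.cos (w₀ * t)),
      V * (w₀ * Real.cos (w₀ * t - 2 * Real.pi / 3)),
      V * (w₀ * Real.cos (w₀ * t + 2 * Real.pi / 3))] : EuclideanSpace ℝ (Fin 3)) := by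
    have hD : HasDerivAt v (WithLp.toLp 2 ![V * (w₀ * Real.cos (w₀ * t)),
        V * (w₀ * Real.cos (w₀ * t - 2 * Real.pi / 3)),
        V * (w₀ * Real.cos (w₀ * t + 2 * Real.pi / 3))] : EuclideanSpace ℝ (Fin 3)) t := by
      rw [hv]
      have e := (EuclideanSpace.equiv (Fin 3) ℝ).symm
      have hg : HasDerivAt (fun t => (![V * Real.sin (w₀ * t),
          V * Real.sin (w₀ * t - 2 * Real.pi / 3),
          V * Real.sin (w₀ * t + 2 * Real.pi / 3)] : Fin 3 → ℝ))
          (![V * (w₀ * Real.cos (w₀ * t)),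
          V * (w₀ * Real.cos (w₀ * t - 2 * Real.pi / 3)),
          V * (w₀ * Real.cos (w₀ * t + 2 * Real.pi / 3))] : Fin 3 → ℝ) t := by
        rw [hasDerivAt_pi]
        intro i
        fin_cases i
        · simpa using sincos_comp V w₀ 0 t
        · simpa [sub_eq_add_neg] using sincos_comp V w₀ (-(2 * Real.pi / 3)) t
        · simpa using sincos_comp V w₀ (2 * Real.pi / 3) t
      exact ((EuclideanSpace.equiv (Fin 3) ℝ).symm.toContinuousLinearMap.hasFDerivAt.comp_hasDerivAt
        t hg)
    exact hD.deriv
  have hnorm : ‖v t‖ ^ 2 = 3 / 2 * V ^ 2 := by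
    rw [← real_inner_self_eq_norm_sq, hv]
    simp only [PiLp.inner_apply, RCLike.inner_apply, conj_trivial, Fin.sum_univ_three]
    simp only [Matrix.cons_val_zero, Matrix.cons_val_one, Matrix.head_cons,
      Matrix.cons_val_two, Matrix.tail_cons]
    rw [hsm, hsp, ← hs]
    linear_combination (V^2*c^2/2) * hr3 + (3/2*V^2) * hsc
  have hω : (‖v t‖ ^ 2)⁻¹ • cross3 (v t) (deriv v t) =
      (w₀ / Real.sqrt 3) • (WithLp.toLp 2 ![1, 1, 1] : EuclideanSpace ℝ (Fin 3)) := by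
    rw [hnorm, hderiv, hv]
    ext i
    have hcr : ∀ x : EuclideanSpace ℝ (Fin 3), ∀ a : ℝ, (a • x) i = a * x i := fun _ _ => rfl
    fin_cases i <;>
    · simp only [cross3, hcr, PiLp.smul_apply, smul_eq_mul, WithLp.ofLp_toLp, Fin.zero_eta,
        Fin.mk_one, Fin.reduceFinMk, Matrix.cons_val_zero,
        Matrix.cons_val_one, Matrix.head_cons, Matrix.cons_val_two, Matrix.tail_cons]
      simp only [hsm, hsp, hcm, hcp, ← hs, ← hc, ← hrr]
      have hV' : (V:ℝ) ≠ 0 := ne_of_gt hV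
      have hr' : r ≠ 0 := ne_of_gt hr3pos
      field_simp
      first
      | linear_combination (2*w₀*r^2)*hsc + (2*w₀)*hr3
      | linear_combination (w₀*r^2)*hsc + (w₀)*hr3
  refine ⟨hnorm, ?_, hω, ?_⟩
  · have : ⟪v t, deriv v t⟫_ℝ = 0 := by
      rw [hderiv, hv]
      simp only [PiLp.inner_apply, RCLike.inner_apply, conj_trivial, Fin.sum_univ_three]
      simp only [Matrix.cons_val_zero, Matrix.cons_val_one, Matrix.head_cons,
        Matrix.cons_val_two, Matrix.tail_cons]
      rw [hsm, hsp, hcm, hcp, ← hs, ← hc]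
      linear_combination (-(V^2*s*w₀*c)/2) * hr3
    rw [this, zero_div]
  · rw [hω]
    have hr' : r ≠ 0 := ne_of_gt hr3pos
    have hsq : ‖((w₀ / Real.sqrt 3) • WithLp.toLp 2 ![1, 1, 1] : EuclideanSpace ℝ (Fin 3))‖ ^ 2 = w₀ ^ 2 := by
      rw [PiLp.norm_sq_eq_of_L2]
      have hcr : ∀ x : EuclideanSpace ℝ (Fin 3), ∀ a : ℝ, ∀ i, (a • x) i = a * x i :=
        fun _ _ _ => rfl
      simp only [PiLp.inner_apply, RCLike.inner_apply, conj_trivial, Fin.sum_univ_three, hcr,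
        Matrix.cons_val_zero, Matrix.cons_val_one, Matrix.head_cons,
        Matrix.cons_val_two, Matrix.tail_cons, ← hrr, Real.norm_eq_abs, sq_abs]
      field_simp
      linear_combination (-w₀^2) * hr3
    rw [← Real.sqrt_sq (norm_nonneg _), hsq, Real.sqrt_sq_eq_abs]
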